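/- Let $(a_n)_{n \in \mathbb{Z}}$ be complex numbers with $\sum_{n=-\infty}^{\infty} |a_n| < \infty$, and suppose the function $f(z) = \sum_{n \in \mathbb{Z}} a_n z^n$ on $\mathbb{T}$ is Hölder continuous with some exponent $\alpha \in (0,1]$. Then for each $z \in \mathbb{T}$, the function $w \mapsto \frac{w(f(w)-f(z))}{z-w}$ is integrable on $\mathbb{T}$ with respect to normalized Lebesgue measure $\mu$, and $\int_{\mathbb{T}} \frac{w(f(w)-f(z))}{z-w}\,\mu(dw) = \sum_{n=-\infty}^{-1} a_n z^n$. -/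

import Mathlib

open MeasureTheory Set

/-- The normalized Lebesgue (Haar) measure on the unit circle, as a measure on `ℂ`. -/
noncomputable def circleMeasure : Measure ℂ :=
  (ENNReal.ofReal (2 * Real.pi))⁻¹ •
    Measure.map (fun t : ℝ => Complex.exp (t * Complex.I))
      (volume.restrict (Ioc 0 (2 * Real.pi)))

open MeasureTheory Set Complex Filter
open scoped ENNReal NNReal Topology

namespace S8

noncomputable def ee (t : ℝ) : ℂ := Complex.exp (t * Complex.I)

lemma ee_cont : Continuous ee := by unfold ee; continuity

lemma ee_abs (t : ℝ) : ‖ee t‖ = 1 := Complex.norm_exp_ofReal_mul_I t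

lemma ee_mem (t : ℝ) : ee t ∈ Metric.sphere (0:ℂ) 1 := by
  simp [Complex.dist_eq, ee_abs]

lemma ee_ne (t : ℝ) : ee t ≠ 0 := Complex.exp_ne_zero _

lemma ee_zpow (t : ℝ) (n : ℤ) : ee t ^ n = Complex.exp (n * (t * Complex.I)) :=
  (Complex.exp_int_mul _ n).symm

lemma integral_exp_Ioc (m : ℤ) :
    ∫ t in Ioc (0:ℝ) (2*Real.pi), Complex.exp (m * (t * Complex.I)) =
      if m = 0 then ((2*Real.pi : ℝ) : ℂ) else 0 := by
  have h2π : (0:ℝ) ≤ 2*Real.pi := by positivity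
  rw [← intervalIntegral.integral_of_le h2π]
  split_ifs with hm
  · subst hm; simp
  · have hm' : (m:ℂ) ≠ 0 := Int.cast_ne_zero.mpr hm
    have hc : (m:ℂ) * Complex.I ≠ 0 := mul_ne_zero hm' Complex.I_ne_zero
    simp_rw [show ∀ t:ℝ, (m:ℂ) * ((t:ℂ) * Complex.I) = (m * Complex.I) * (t:ℂ) from fun t => by ring]
    rw [integral_exp_mul_complex (a := (0:ℝ)) (b := 2*Real.pi) hc]
    rw [show (m:ℂ) * Complex.I * ((2*Real.pi:ℝ):ℂ) = m * (2*(Real.pi:ℂ) * Complex.I) by push_cast; ring,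
      Complex.exp_int_mul_two_pi_mul_I]
    simp

lemma chord {y : ℝ} (hy : |y| ≤ Real.pi) :
    2 / Real.pi * |y| ≤ ‖Complex.exp (y * Complex.I) - 1‖ := by
  have habs : ‖Complex.exp (y * Complex.I) - 1‖ = 2 * |Real.sin (y/2)| := by
    have h1 : Complex.exp (y * Complex.I) - 1
        = ((Real.cos y - 1 : ℝ) : ℂ) + ((Real.sin y : ℝ) : ℂ) * Complex.I := by
      rw [Complex.exp_mul_I, ← Complex.ofReal_cos, ← Complex.ofReal_sin]
      push_cast; ring
    rw [h1, Complex.norm_add_mul_I, Real.abs_sin_half]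
    rw [show (Real.cos y - 1)^2 + Real.sin y^2 = 2^2 * ((1 - Real.cos y)/2) by
      nlinarith [Real.sin_sq y]]
    rw [Real.sqrt_mul (by positivity), Real.sqrt_sq (by norm_num : (0:ℝ) ≤ 2)]
  have h4 : Real.sin (|y|/2) ≤ |Real.sin (y/2)| := by
    rcases le_or_gt 0 y with h|h
    · rw [_root_.abs_of_nonneg h]; exact le_abs_self _
    · rw [_root_.abs_of_neg h, show -y/2 = -(y/2) by ring, Real.sin_neg]
      exact neg_le_abs _
  have h5 : 2/Real.pi * (|y|/2) ≤ Real.sin (|y|/2) :=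
    Real.mul_le_sin (by positivity) (by linarith)
  calc 2/Real.pi * |y| = 2 * (2/Real.pi * (|y|/2)) := by ring
    _ ≤ 2 * |Real.sin (y/2)| := by linarith
    _ = _ := habs.symm


lemma absRpowInt {β : ℝ} (hβ : -1 < β) (c p q : ℝ) :
    IntegrableOn (fun t : ℝ => |t - c| ^ β) (Ioc p q) := by
  have A : ∀ r : ℝ, 0 ≤ r → IntegrableOn (fun t : ℝ => |t| ^ β) (Ioc 0 r) := by
    intro r hr
    have h := intervalIntegral.intervalIntegrable_rpow' (a := 0) (b := r) hβ
    rw [intervalIntegrable_iff, uIoc_of_le hr] at h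
    exact h.congr_fun (fun t ht => by rw [_root_.abs_of_pos ht.1]) measurableSet_Ioc
  have B : ∀ r : ℝ, 0 ≤ r → IntegrableOn (fun t : ℝ => |t| ^ β) (Ioc (-r) 0) := by
    intro r hr
    have h1 : IntervalIntegrable (fun t : ℝ => |t| ^ β) volume 0 r := by
      rw [intervalIntegrable_iff, uIoc_of_le hr]; exact A r hr
    have h2 := h1.comp_mul_left (c := -1)
    simp only [neg_one_mul, abs_neg] at h2
    rw [intervalIntegrable_iff] at h2
    have h3 : (r / (-1) : ℝ) = -r := by rw [div_neg, div_one]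
    have h3' : ((0:ℝ) / (-1) : ℝ) = 0 := zero_div _
    have h4 : Set.uIoc (0 / (-1) : ℝ) (r / (-1)) = Ioc (-r) 0 := by
      rw [h3, h3', Set.uIoc_comm, uIoc_of_le (by linarith : -r ≤ 0)]
    rw [h4] at h2
    exact h2
  have base : ∀ u v : ℝ, IntegrableOn (fun t : ℝ => |t| ^ β) (Ioc u v) := by
    intro u v
    set R := max |u| |v| + 1 with hR
    have hR0 : (0:ℝ) ≤ R := by
      have := le_trans (abs_nonneg u) (le_max_left |u| |v|); linarith
    have hsub : Ioc u v ⊆ Ioc (-R) 0 ∪ Ioc 0 R := by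
      intro x hx
      have hx1 : -R < x := by
        have h1 := neg_abs_le u
        have h2 := le_max_left |u| |v|
        have := hx.1; simp only [hR] at *; linarith
      have hx2 : x ≤ R := by
        have h1 := le_abs_self v
        have h2 := le_max_right |u| |v|
        have := hx.2; simp only [hR] at *; linarith
      rcases le_or_gt x 0 with h|h
      · exact Or.inl ⟨hx1, h⟩
      · exact Or.inr ⟨h, hx2⟩
    exact ((B R hR0).union (A R hR0)).mono_set hsub
  have h6 : IntervalIntegrable (fun t : ℝ => |t| ^ β) volume (p - c) (q - c) := by
    rw [intervalIntegrable_iff]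
    rcases le_total (p - c) (q - c) with h|h
    · rw [uIoc_of_le h]; exact base _ _
    · rw [Set.uIoc_comm, uIoc_of_le h]; exact base _ _
  have h7 := h6.comp_sub_right c
  simp only [sub_add_cancel] at h7
  rw [intervalIntegrable_iff] at h7
  exact h7.mono_set Ioc_subset_uIoc

lemma coefF (a : ℤ → ℂ) (hsum : Summable fun n : ℤ => ‖a n‖) (N : ℤ) :
    ∫ t in Ioc (0:ℝ) (2*Real.pi),
      (∑' n : ℤ, a n * Complex.exp (n * (t * Complex.I))) * Complex.exp (-(N:ℂ) * (t * Complex.I))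
      = ((2*Real.pi : ℝ) : ℂ) * a N := by
  have hmS : MeasurableSet (Ioc (0:ℝ) (2*Real.pi)) := measurableSet_Ioc
  have hterm : ∀ n : ℤ, ∀ t : ℝ,
      ‖a n * Complex.exp (n * (t*Complex.I)) * Complex.exp (-(N:ℂ) * (t*Complex.I))‖
        = ‖a n‖ := by
    intro n t
    simp [Complex.norm_exp]
  calc ∫ t in Ioc (0:ℝ) (2*Real.pi),
        (∑' n : ℤ, a n * Complex.exp (n * (t * Complex.I))) * Complex.exp (-(N:ℂ) * (t * Complex.I))
      = ∫ t in Ioc (0:ℝ) (2*Real.pi),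
          ∑' n : ℤ, a n * Complex.exp (n * (t * Complex.I)) * Complex.exp (-(N:ℂ) * (t * Complex.I)) := by
        refine setIntegral_congr_fun hmS fun t _ => ?_
        exact tsum_mul_right.symm
    _ = ∑' n : ℤ, ∫ t in Ioc (0:ℝ) (2*Real.pi),
          a n * Complex.exp (n * (t * Complex.I)) * Complex.exp (-(N:ℂ) * (t * Complex.I)) := by
        refine integral_tsum (fun n => Continuous.aestronglyMeasurable (by fun_prop)) ?_
        have h1 : ∀ n : ℤ, ∫⁻ t in Ioc (0:ℝ) (2*Real.pi),
            ‖a n * Complex.exp (n * (t*Complex.I)) * Complex.exp (-(N:ℂ) * (t*Complex.I))‖₊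
            = (‖a n‖₊ : ℝ≥0∞) * ENNReal.ofReal (2*Real.pi) := by
          intro n
          have heq : (fun t : ℝ => (‖a n * Complex.exp (n * (t*Complex.I)) * Complex.exp (-(N:ℂ) * (t*Complex.I))‖₊ : ℝ≥0∞))
              = fun _ : ℝ => (‖a n‖₊ : ℝ≥0∞) := by
            funext t
            congr 1
            apply NNReal.coe_injective
            simpa [coe_nnnorm] using hterm n t
          rw [heq, setLIntegral_const, Real.volume_Ioc]
          norm_num
        have h2 : ∑' n : ℤ, ∫⁻ t in Ioc (0:ℝ) (2*Real.pi),
            ‖a n * Complex.exp (n * (t*Complex.I)) * Complex.exp (-(N:ℂ) * (t*Complex.I))‖₊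
            = (∑' n : ℤ, (‖a n‖₊ : ℝ≥0∞)) * ENNReal.ofReal (2*Real.pi) := by
          rw [← ENNReal.tsum_mul_right]; exact tsum_congr h1
        simp only [enorm_eq_nnnorm]
        rw [h2]
        refine ENNReal.mul_ne_top ?_ ENNReal.ofReal_ne_top
        rw [ENNReal.tsum_coe_ne_top_iff_summable, ← NNReal.summable_coe]
        simpa [coe_nnnorm] using hsum
    _ = ∑' n : ℤ, a n * ∫ t in Ioc (0:ℝ) (2*Real.pi), Complex.exp ((↑(n - N)) * (t * Complex.I)) := by
        refine tsum_congr fun n => ?_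
        have hpt : ∀ t : ℝ, t ∈ Ioc (0:ℝ) (2*Real.pi) →
            a n * Complex.exp (n * (t*Complex.I)) * Complex.exp (-(N:ℂ) * (t*Complex.I))
              = a n * Complex.exp ((↑(n - N)) * (t * Complex.I)) := by
          intro t _
          rw [mul_assoc, ← Complex.exp_add]
          congr 2
          push_cast; ring
        rw [setIntegral_congr_fun hmS hpt]
        exact integral_const_mul _ _
    _ = ((2*Real.pi : ℝ) : ℂ) * a N := by
        rw [tsum_eq_single N ?_]
        · rw [integral_exp_Ioc (N - N)]
          simp [mul_comm]
        · intro n hn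
          rw [integral_exp_Ioc (n - N), if_neg (sub_ne_zero.mpr hn), mul_zero]

lemma RL {G : ℝ → ℂ} :
    Tendsto (fun N : ℕ => ∫ t in Ioc (0:ℝ) (2*Real.pi),
        G t * Complex.exp (-(N:ℂ) * (t * Complex.I))) atTop (𝓝 0) := by
  set H : ℝ → ℂ := (Ioc (0:ℝ) (2*Real.pi)).indicator G with hH
  have key : ∀ N : ℕ, ∫ t in Ioc (0:ℝ) (2*Real.pi), G t * Complex.exp (-(N:ℂ) * (t*Complex.I))
      = FourierTransform.fourier H ((N:ℝ) / (2*Real.pi)) := by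
    intro N
    rw [Real.fourier_real_eq_integral_exp_smul]
    have hpt : ∀ v : ℝ, Complex.exp (↑(-2 * Real.pi * v * ((N:ℝ)/(2*Real.pi))) * Complex.I) • H v
        = (Ioc (0:ℝ) (2*Real.pi)).indicator
            (fun t => G t * Complex.exp (-(N:ℂ) * (t*Complex.I))) v := by
      intro v
      by_cases hv : v ∈ Ioc (0:ℝ) (2*Real.pi)
      · rw [hH, Set.indicator_of_mem hv, Set.indicator_of_mem hv, smul_eq_mul, mul_comm]
        congr 1
        have hval : -2 * Real.pi * v * ((N:ℝ)/(2*Real.pi)) = -((N:ℝ)*v) := by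
          field_simp
        rw [hval]
        push_cast
        ring_nf
      · rw [hH, Set.indicator_of_notMem hv, Set.indicator_of_notMem hv, smul_zero]
    rw [integral_congr_ae (Filter.Eventually.of_forall hpt),
      integral_indicator measurableSet_Ioc]
  have hcomp : Tendsto (fun N : ℕ => (N:ℝ)/(2*Real.pi)) atTop (cocompact ℝ) := by
    refine Tendsto.mono_right (tendsto_natCast_atTop_atTop.atTop_div_const (by positivity)) ?_
    rw [cocompact_eq_atBot_atTop]; exact le_sup_right
  have h := (Real.zero_at_infty_fourier H).comp hcomp
  rw [show (fun N : ℕ => ∫ t in Ioc (0:ℝ) (2*Real.pi), G t * Complex.exp (-(N:ℂ) * (t*Complex.I)))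
      = (FourierTransform.fourier H) ∘ (fun N : ℕ => (N:ℝ)/(2*Real.pi)) from funext key]
  exact h

noncomputable def ee' (t : ℝ) : ℂ :=
  if t ∈ Ioc (0:ℝ) (2*Real.pi) then ee t else 2 + t * Complex.I

lemma ee'_meas : Measurable ee' :=
  Measurable.ite measurableSet_Ioc ee_cont.measurable
    (Continuous.measurable (by continuity))

lemma abs_two_add (t : ℝ) : 2 ≤ ‖2 + t * Complex.I‖ := by
  have h := Complex.abs_re_le_norm (2 + t*Complex.I)
  simpa using h

lemma ee'_inj : Function.Injective ee' := by
  have habs : ∀ t : ℝ, ¬ (t ∈ Ioc (0:ℝ) (2*Real.pi)) → ∀ s : ℝ, ee s ≠ 2 + t * Complex.I := by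
    intro t _ s h
    have h1 : ‖ee s‖ = 1 := ee_abs s
    rw [h] at h1
    linarith [abs_two_add t]
  intro s t h
  unfold ee' at h
  by_cases hs : s ∈ Ioc (0:ℝ) (2*Real.pi) <;> by_cases ht : t ∈ Ioc (0:ℝ) (2*Real.pi)
  · rw [if_pos hs, if_pos ht] at h
    unfold ee at h
    rw [Complex.exp_eq_exp_iff_exists_int] at h
    obtain ⟨n, hn⟩ := h
    have him := congrArg Complex.im hn
    simp [Complex.add_im, Complex.mul_im] at him
    have hst : s = t + n * (2*Real.pi) := by linarith
    have hπ := Real.pi_pos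
    have hn0 : n = 0 := by
      by_contra h0
      rcases lt_or_gt_of_ne h0 with h1|h1
      · have h2' : n ≤ -1 := by omega
        have h2 : (n:ℝ) ≤ -1 := by exact_mod_cast h2'
        nlinarith [hs.1, hs.2, ht.1, ht.2]
      · have h2' : (1:ℤ) ≤ n := by omega
        have h2 : (1:ℝ) ≤ (n:ℝ) := by exact_mod_cast h2'
        nlinarith [hs.1, hs.2, ht.1, ht.2]
    rw [hn0] at hst; simpa using hst
  · rw [if_pos hs, if_neg ht] at h
    exact absurd h (habs t ht s)
  · rw [if_neg hs, if_pos ht] at h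
    exact absurd h.symm (habs s hs t)
  · rw [if_neg hs, if_neg ht] at h
    have him := congrArg Complex.im h
    simpa using him

lemma ee'_emb : MeasurableEmbedding ee' := ee'_meas.measurableEmbedding ee'_inj

lemma map_ee_eq : Measure.map ee (volume.restrict (Ioc (0:ℝ) (2*Real.pi)))
    = Measure.map ee' (volume.restrict (Ioc (0:ℝ) (2*Real.pi))) := by
  apply Measure.map_congr
  exact (ae_restrict_mem measurableSet_Ioc).mono fun t ht => by simp [ee', ht]
end S8


set_option maxHeartbeats 1000000 in
theorem stmt_8 (a : ℤ → ℂ) (hsum : Summable fun n : ℤ => ‖a n‖)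
    (f : ℂ → ℂ) (hf : ∀ z ∈ Metric.sphere (0:ℂ) 1, f z = ∑' n : ℤ, a n * z ^ n)
    (α : ℝ) (hα1 : 0 < α) (hα2 : α ≤ 1) (C : ℝ) (hC : 0 < C)
    (hHolder : ∀ z ∈ Metric.sphere (0:ℂ) 1, ∀ w ∈ Metric.sphere (0:ℂ) 1,
      ‖f z - f w‖ ≤ C * ‖z - w‖ ^ α) :
    ∀ z ∈ Metric.sphere (0:ℂ) 1,
      Integrable (fun w : ℂ => w * (f w - f z) / (z - w)) circleMeasure ∧
      ∫ w, w * (f w - f z) / (z - w) ∂circleMeasure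
        = ∑' n : ℕ, a (-(n : ℤ) - 1) * z ^ (-(n : ℤ) - 1) := by
  intro z hz
  have hπ := Real.pi_pos
  have hz1 : ‖z‖ = 1 := by simpa [Complex.dist_eq] using hz
  have hznorm : ‖z‖ = 1 := by rw [hz1]
  have hzθ : Complex.exp ((Complex.arg z : ℝ) * Complex.I) = z := by
    have h := Complex.norm_mul_exp_arg_mul_I z
    rwa [hz1, Complex.ofReal_one, one_mul] at h
  set θ := Complex.arg z with hθdef
  have hθ1 : -Real.pi < θ := Complex.neg_pi_lt_arg z
  have hθ2 : θ ≤ Real.pi := Complex.arg_le_pi z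
  set S : Set ℝ := Ioc (0:ℝ) (2*Real.pi) with hSdef
  set F : ℝ → ℂ := fun t => ∑' n : ℤ, a n * Complex.exp (n * (t * Complex.I)) with hFdef
  have hsum' : Summable fun n : ℤ => ‖a n‖ := by
    simpa using hsum
  have hnexp : ∀ (c : ℂ), c.im = 0 → ∀ t : ℝ, ‖Complex.exp (c * (t * Complex.I))‖ = 1 := by
    intro c hc t
    simp [Complex.norm_exp, Complex.mul_re, hc]
  have hFcont : Continuous F := by
    refine continuous_tsum (fun n => continuous_const.mul (Complex.continuous_exp.comp (continuous_const.mul (Complex.continuous_ofReal.mul continuous_const)))) hsum' (fun n t => ?_)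
    rw [norm_mul, hnexp (n:ℂ) (by simp) t, mul_one]
  have hFe : ∀ t : ℝ, f (S8.ee t) = F t := fun t => by
    rw [hf _ (S8.ee_mem t)]
    exact tsum_congr fun n => by rw [S8.ee_zpow]
  set G : ℝ → ℂ := fun t => S8.ee t * (F t - f z) / (z - S8.ee t) with hGdef
  have hGmeas : Measurable G := by
    apply Measurable.div
    · exact S8.ee_cont.measurable.mul (hFcont.measurable.sub measurable_const)
    · exact measurable_const.sub S8.ee_cont.measurable
  set β : ℝ := α - 1 with hβdef
  have hβ1 : -1 < β := by rw [hβdef]; linarith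
  have hβ0 : β ≤ 0 := by rw [hβdef]; linarith
  set D : ℝ → ℝ := fun t => (C * (2/Real.pi) ^ β) * (|t - θ| ^ β + |t - (θ + 2*Real.pi)| ^ β)
    with hDdef
  have hDint : IntegrableOn D S :=
    ((S8.absRpowInt hβ1 θ 0 (2*Real.pi)).add
      (S8.absRpowInt hβ1 (θ+2*Real.pi) 0 (2*Real.pi))).const_mul _
  have hc₀ : (0:ℝ) < (2/Real.pi) ^ β := Real.rpow_pos_of_pos (by positivity) β
  have hGbd : ∀ t ∈ S, t ≠ θ → t ≠ θ + 2*Real.pi → ‖G t‖ ≤ D t := by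
    intro t ht ht1 ht2
    have hDnn : (0:ℝ) ≤ (C * (2/Real.pi)^β) * (|t - θ| ^ β + |t - (θ + 2*Real.pi)| ^ β) := by
      have h1 : (0:ℝ) ≤ |t - θ| ^ β := Real.rpow_nonneg (abs_nonneg _) β
      have h2 : (0:ℝ) ≤ |t - (θ + 2*Real.pi)| ^ β := Real.rpow_nonneg (abs_nonneg _) β
      positivity
    by_cases hez : S8.ee t = z
    · have h0 : G t = 0 := by simp [hGdef, hez]
      rw [h0, norm_zero]; exact hDnn
    · have hrpos : 0 < ‖z - S8.ee t‖ := by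
        rw [norm_pos_iff]
        exact sub_ne_zero.mpr (fun h => hez h.symm)
      have hHold : ‖F t - f z‖ ≤ C * ‖z - S8.ee t‖ ^ α := by
        have h := hHolder (S8.ee t) (S8.ee_mem t) z hz
        rw [hFe t] at h
        rw [norm_sub_rev z (S8.ee t)]
        exact h
      have hnorm : ‖G t‖ = ‖F t - f z‖ / ‖z - S8.ee t‖ := by
        simp only [hGdef, norm_div, norm_mul, S8.ee_abs, one_mul]
      have hW : S8.ee t = z * Complex.exp (((t - θ : ℝ)) * Complex.I) := by
        rw [← hzθ]
        show Complex.exp _ = _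
        rw [← Complex.exp_add]
        congr 1
        push_cast; ring
      have hchord : ‖z - S8.ee t‖
          = ‖Complex.exp (((t - θ:ℝ)) * Complex.I) - 1‖ := by
        have h1 : z - S8.ee t = z * (1 - Complex.exp (((t-θ:ℝ))*Complex.I)) := by
          rw [hW]; ring
        rw [h1, norm_mul, hz1, one_mul, norm_sub_rev]
      obtain ⟨y, hy1, hy2, hy3, hy4⟩ :
          ∃ y : ℝ, |y| ≤ Real.pi ∧ y ≠ 0 ∧
            Complex.exp ((y:ℝ) * Complex.I) = Complex.exp (((t - θ:ℝ)) * Complex.I) ∧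
            (|y| = |t - θ| ∨ |y| = |t - (θ + 2*Real.pi)|) := by
        rcases le_or_gt (t - θ) Real.pi with h|h
        · refine ⟨t - θ, ?_, sub_ne_zero.mpr ht1, rfl, Or.inl rfl⟩
          rw [abs_le]; exact ⟨by linarith [ht.1], h⟩
        · refine ⟨t - θ - 2*Real.pi, ?_, ?_, ?_, Or.inr (by rw [show t - θ - 2*Real.pi = t - (θ + 2*Real.pi) by ring])⟩
          · rw [abs_le]; exact ⟨by linarith [ht.2], by linarith [ht.2]⟩
          · intro h0; exact ht2 (by linarith)
          · rw [show ((t - θ - 2*Real.pi : ℝ):ℂ) * Complex.I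
                = ((t - θ : ℝ):ℂ) * Complex.I + ((-1:ℤ):ℂ) * (2*(Real.pi:ℂ) * Complex.I) by
                push_cast; ring]
            rw [Complex.exp_add, Complex.exp_int_mul_two_pi_mul_I, mul_one]
      have hsin : 2/Real.pi * |y| ≤ ‖z - S8.ee t‖ := by
        rw [hchord, ← hy3]; exact S8.chord hy1
      have hy0 : 0 < 2/Real.pi * |y| := by
        have h0 : 0 < |y| := abs_pos.mpr hy2
        positivity
      have hkey : ‖z - S8.ee t‖ ^ β ≤ (2/Real.pi)^β * |y| ^ β := by
        calc ‖z - S8.ee t‖ ^ β ≤ (2/Real.pi * |y|) ^ β :=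
              Real.rpow_le_rpow_of_nonpos hy0 hsin hβ0
          _ = (2/Real.pi)^β * |y|^β := Real.mul_rpow (by positivity) (abs_nonneg y)
      have hyD : |y| ^ β ≤ |t - θ| ^ β + |t - (θ + 2*Real.pi)| ^ β := by
        rcases hy4 with h|h <;> rw [h]
        · exact le_add_of_nonneg_right (Real.rpow_nonneg (abs_nonneg _) β)
        · exact le_add_of_nonneg_left (Real.rpow_nonneg (abs_nonneg _) β)
      have hrw : C * ‖z - S8.ee t‖ ^ α / ‖z - S8.ee t‖
          = C * ‖z - S8.ee t‖ ^ β := by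
        rw [hβdef, Real.rpow_sub hrpos, Real.rpow_one, mul_div_assoc]
      have hstep : ‖G t‖ ≤ C * ‖z - S8.ee t‖ ^ β := by
        rw [hnorm, ← hrw]
        exact (div_le_div_iff_of_pos_right hrpos).mpr hHold
      calc ‖G t‖ ≤ C * ‖z - S8.ee t‖ ^ β := hstep
        _ ≤ C * ((2/Real.pi)^β * |y|^β) := mul_le_mul_of_nonneg_left hkey hC.le
        _ = (C * (2/Real.pi)^β) * |y|^β := by ring
        _ ≤ (C * (2/Real.pi)^β) * (|t - θ| ^ β + |t - (θ + 2*Real.pi)| ^ β) :=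
              mul_le_mul_of_nonneg_left hyD (by positivity)
        _ = D t := rfl
  have hGae : ∀ᵐ t ∂(volume.restrict S), ‖G t‖ ≤ D t := by
    have h1 : ∀ᵐ t : ℝ ∂volume, t ≠ θ ∧ t ≠ θ + 2*Real.pi := by
      have h0 : (volume : Measure ℝ) ({θ} ∪ {θ + 2*Real.pi}) = 0 := by
        refine measure_union_null ?_ ?_ <;> exact Real.volume_singleton
      rw [ae_iff]
      refine measure_mono_null ?_ h0
      intro x hx
      simp only [not_and_or, not_not, Set.mem_setOf_eq] at hx
      rcases hx with h|h
      · exact Or.inl (by simp [h])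
      · exact Or.inr (by simp [h])
    filter_upwards [ae_restrict_of_ae h1, ae_restrict_mem measurableSet_Ioc] with t h3 h4
    exact hGbd t h4 h3.1 h3.2
  have hGint : IntegrableOn G S := Integrable.mono' hDint hGmeas.aestronglyMeasurable hGae
  -- transfer to the circle
  have hcm : circleMeasure
      = (ENNReal.ofReal (2*Real.pi))⁻¹ • Measure.map S8.ee' (volume.restrict S) := by
    rw [circleMeasure, show (fun t : ℝ => Complex.exp (t * Complex.I)) = S8.ee from rfl,
      S8.map_ee_eq]
  have hc0 : (ENNReal.ofReal (2*Real.pi))⁻¹ ≠ 0 := by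
    exact ENNReal.inv_ne_zero.mpr ENNReal.ofReal_ne_top
  have hcT : (ENNReal.ofReal (2*Real.pi))⁻¹ ≠ ⊤ := by
    rw [ne_eq, ENNReal.inv_eq_top]
    exact (ENNReal.ofReal_pos.mpr (by positivity)).ne'
  have hcongr : (fun t : ℝ => (fun w : ℂ => w * (f w - f z) / (z - w)) (S8.ee' t))
      =ᵐ[volume.restrict S] G := by
    filter_upwards [ae_restrict_mem measurableSet_Ioc] with t ht
    have h1 : S8.ee' t = S8.ee t := by simp only [S8.ee', if_pos (show t ∈ Ioc (0:ℝ) (2*Real.pi) from ht)]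
    show S8.ee' t * (f (S8.ee' t) - f z) / (z - S8.ee' t) = G t
    rw [h1, hFe t]
  have hInt : Integrable (fun w : ℂ => w * (f w - f z) / (z - w)) circleMeasure := by
    rw [hcm, integrable_smul_measure hc0 hcT, S8.ee'_emb.integrable_map_iff]
    exact hGint.congr hcongr.symm
  refine ⟨hInt, ?_⟩
  -- Fourier coefficients of G
  set Gh : ℕ → ℂ := fun N => ∫ t in S, G t * Complex.exp (-(N:ℂ) * (t * Complex.I)) with hGhdef
  have hEint : ∀ c : ℂ, c.im = 0 →
      IntegrableOn (fun t => G t * Complex.exp (c * (t * Complex.I))) S := by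
    intro c hc
    have h := hGint.bdd_mul (f := fun t : ℝ => Complex.exp (c * (t*Complex.I)))
      (Continuous.aestronglyMeasurable (Complex.continuous_exp.comp (continuous_const.mul (Complex.continuous_ofReal.mul continuous_const)))) (c := 1) (Filter.Eventually.of_forall fun t => (hnexp c hc t).le)
    simpa [mul_comm, IntegrableOn] using h
  have hcoe : ∀ N : ℕ, ∫ t in S, F t * Complex.exp (-(N:ℂ) * (t*Complex.I))
      = ((2*Real.pi:ℝ):ℂ) * a N := by
    intro N
    have h := S8.coefF a hsum (N:ℤ)
    simp only [Int.cast_natCast] at h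
    exact h
  have hIexp' : ∀ N : ℕ, (∫ t in S, Complex.exp (-(N:ℂ) * (t * Complex.I)))
      = if N = 0 then ((2*Real.pi:ℝ):ℂ) else 0 := by
    intro N
    have h := S8.integral_exp_Ioc (-(N:ℤ))
    simp only [Int.cast_neg, Int.cast_natCast, neg_eq_zero, Int.natCast_eq_zero] at h
    exact h
  have hrec : ∀ N : ℕ,
      z * (∫ t in S, G t * Complex.exp (-((N:ℂ)+1) * (t * Complex.I))) - Gh N
      = ((2*Real.pi:ℝ):ℂ) * a N - f z * (if N = 0 then ((2*Real.pi:ℝ):ℂ) else 0) := by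
    intro N
    have hpt : ∀ t : ℝ,
        z * (G t * Complex.exp (-((N:ℂ)+1) * (t * Complex.I)))
          - G t * Complex.exp (-(N:ℂ) * (t*Complex.I))
        = (F t - f z) * Complex.exp (-(N:ℂ) * (t*Complex.I)) := by
      intro t
      have hEe : Complex.exp (-((N:ℂ)+1) * (t * Complex.I))
          = Complex.exp (-(N:ℂ) * (t*Complex.I)) * (S8.ee t)⁻¹ := by
        rw [show (S8.ee t)⁻¹ = Complex.exp (-(t * Complex.I)) from by
          rw [Complex.exp_neg]; rfl]
        rw [← Complex.exp_add]; congr 1; ring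
      rw [hEe]
      by_cases hez : S8.ee t = z
      · have hG0 : G t = 0 := by simp [hGdef, hez]
        have hFz0 : F t - f z = 0 := by rw [← hFe t, hez, sub_self]
        rw [hG0, hFz0]; simp
      · have hw := S8.ee_ne t
        have hzw : z - S8.ee t ≠ 0 := sub_ne_zero.mpr (fun h => hez h.symm)
        simp only [hGdef]
        field_simp
    have hs1 := hEint (-((N:ℂ)+1)) (by simp)
    have hs0 := hEint (-(N:ℂ)) (by simp)
    have hcE : Continuous fun t : ℝ => Complex.exp (-(N:ℂ)*((t:ℂ)*Complex.I)) :=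
      (Complex.continuous_exp.comp (continuous_const.mul (Complex.continuous_ofReal.mul continuous_const)))
    have hcF : Continuous fun t : ℝ => F t * Complex.exp (-(N:ℂ)*((t:ℂ)*Complex.I)) :=
      hFcont.mul hcE
    calc z * (∫ t in S, G t * Complex.exp (-((N:ℂ)+1) * (t * Complex.I))) - Gh N
        = ∫ t in S, (z * (G t * Complex.exp (-((N:ℂ)+1) * (t * Complex.I)))
            - G t * Complex.exp (-(N:ℂ) * (t*Complex.I))) := by
          rw [integral_sub (hs1.const_mul z) hs0, integral_const_mul]
      _ = ∫ t in S, (F t - f z) * Complex.exp (-(N:ℂ) * (t*Complex.I)) :=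
          setIntegral_congr_fun measurableSet_Ioc fun t _ => hpt t
      _ = (∫ t in S, F t * Complex.exp (-(N:ℂ) * (t*Complex.I)))
            - f z * ∫ t in S, Complex.exp (-(N:ℂ) * (t*Complex.I)) := by
          simp_rw [sub_mul]
          rw [integral_sub hcF.integrableOn_Ioc ((hcE.integrableOn_Ioc).const_mul (f z)),
            integral_const_mul]
      _ = _ := by rw [hcoe N, hIexp' N]
  have hGhsucc : ∀ N : ℕ, Gh (N+1)
      = ∫ t in S, G t * Complex.exp (-((N:ℂ)+1) * (t * Complex.I)) := by
    intro N
    refine setIntegral_congr_fun measurableSet_Ioc fun t _ => ?_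
    congr 2
    push_cast
    ring
  set Tc : ℂ := ((2*Real.pi:ℝ):ℂ) with hTcdef
  have hind : ∀ M : ℕ, Gh 0
      = z^(M+1) * Gh (M+1) - Tc * (∑ n ∈ Finset.range (M+1), a n * z^n) + Tc * f z := by
    intro M
    induction M with
    | zero =>
      have h := hrec 0
      rw [← hGhsucc 0, if_pos rfl] at h
      rw [Finset.range_one, Finset.sum_singleton]
      simp only [pow_one, Nat.cast_zero, pow_zero, mul_one] at h ⊢
      linear_combination -h
    | succ M ih =>
      have h := hrec (M+1)
      rw [← hGhsucc (M+1), if_neg (Nat.succ_ne_zero M)] at h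
      rw [Finset.sum_range_succ]
      linear_combination ih - z^(M+1) * h
  have hRL : Tendsto Gh atTop (𝓝 0) := S8.RL
  have hRL1 : Tendsto (fun M : ℕ => Gh (M+1)) atTop (𝓝 0) := hRL.comp (tendsto_add_atTop_nat 1)
  have hzpow : Tendsto (fun M : ℕ => z^(M+1) * Gh (M+1)) atTop (𝓝 0) := by
    rw [tendsto_zero_iff_norm_tendsto_zero]
    have heq : (fun M : ℕ => ‖z^(M+1) * Gh (M+1)‖) = fun M : ℕ => ‖Gh (M+1)‖ := by
      funext M
      rw [norm_mul, norm_pow, hznorm, one_pow, one_mul]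
    rw [heq]
    simpa using hRL1.norm
  have hsumnat : Summable (fun n : ℕ => a n * z ^ n) := by
    refine Summable.of_norm ?_
    have heq : (fun n : ℕ => ‖a (n:ℤ) * z ^ n‖) = fun n : ℕ => ‖a (n:ℤ)‖ := by
      funext n
      rw [norm_mul, norm_pow, hznorm, one_pow, mul_one]
    rw [heq]
    exact hsum'.comp_injective (fun x y h => by exact_mod_cast h)
  have hpartial : Tendsto (fun M : ℕ => ∑ n ∈ Finset.range (M+1), a n * z^n) atTop
      (𝓝 (∑' n : ℕ, a n * z^n)) :=
    hsumnat.hasSum.tendsto_sum_nat.comp (tendsto_add_atTop_nat 1)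
  have hGh0 : Gh 0 = 0 - Tc * (∑' n : ℕ, a n * z^n) + Tc * f z := by
    have hT : Tendsto (fun M : ℕ => z^(M+1) * Gh (M+1)
        - Tc * (∑ n ∈ Finset.range (M+1), a n * z^n) + Tc * f z)
        atTop (𝓝 (0 - Tc * (∑' n : ℕ, a n * z^n) + Tc * f z)) :=
      (hzpow.sub (hpartial.const_mul Tc)).add tendsto_const_nhds
    have hConst : Tendsto (fun _ : ℕ => Gh 0) atTop (𝓝 (Gh 0)) := tendsto_const_nhds
    rw [show (fun _ : ℕ => Gh 0) = fun M : ℕ => z^(M+1) * Gh (M+1)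
        - Tc * (∑ n ∈ Finset.range (M+1), a n * z^n) + Tc * f z from funext hind] at hConst
    exact tendsto_nhds_unique hConst hT
  -- decompose f z
  have hzn : ∀ n : ℤ, ‖z ^ n‖ = 1 := fun n => by
    rw [norm_zpow, hz1, one_zpow]
  have hfnat : Summable fun n : ℕ => a (n:ℤ) * z ^ ((n:ℤ)) := by
    refine Summable.of_norm ?_
    have heq : (fun n : ℕ => ‖a (n:ℤ) * z ^ ((n:ℤ))‖) = fun n : ℕ => ‖a (n:ℤ)‖ := by
      funext n; rw [norm_mul, hzn, mul_one]
    rw [heq]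
    exact hsum'.comp_injective (fun x y h => by exact_mod_cast h)
  have hfneg : Summable fun n : ℕ => a (-((n:ℤ)+1)) * z ^ (-((n:ℤ)+1)) := by
    refine Summable.of_norm ?_
    have heq : (fun n : ℕ => ‖a (-((n:ℤ)+1)) * z ^ (-((n:ℤ)+1))‖)
        = fun n : ℕ => ‖a (-((n:ℤ)+1))‖ := by
      funext n; rw [norm_mul, hzn, mul_one]
    rw [heq]
    refine hsum'.comp_injective (fun x y h => ?_)
    have : -((x:ℤ)+1) = -((y:ℤ)+1) := h
    omega
  have hfz2 : f z = (∑' n : ℕ, a n * z ^ n) + ∑' n : ℕ, a (-((n:ℤ)+1)) * z ^ (-((n:ℤ)+1)) := by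
    rw [hf z hz, tsum_of_nat_of_neg_add_one (f := fun n : ℤ => a n * z ^ n) hfnat hfneg]
    first
    | rfl
    | (congr 1; exact tsum_congr fun n => by rw [zpow_natCast])
  have hGh0' : Gh 0 = Tc * ∑' n : ℕ, a (-((n:ℤ)+1)) * z ^ (-((n:ℤ)+1)) := by
    rw [hGh0, hfz2]; ring
  have hIeq : ∫ w, w * (f w - f z) / (z - w) ∂circleMeasure
      = ((2*Real.pi)⁻¹ : ℝ) • Gh 0 := by
    rw [hcm, integral_smul_measure, S8.ee'_emb.integral_map]
    have hGh00 : Gh 0 = ∫ t in S, G t := by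
      refine setIntegral_congr_fun measurableSet_Ioc fun t _ => ?_
      simp
    congr 1
    · rw [ENNReal.toReal_inv, ENNReal.toReal_ofReal (by positivity)]
    · rw [integral_congr_ae hcongr, hGh00]
  rw [hIeq, hGh0', Complex.real_smul]
  have hTT : (((2*Real.pi)⁻¹ : ℝ):ℂ) * Tc = 1 := by
    rw [hTcdef, ← Complex.ofReal_mul, inv_mul_cancel₀ (by positivity : (2*Real.pi) ≠ 0),
      Complex.ofReal_one]
  rw [← mul_assoc, hTT, one_mul]
  exact tsum_congr fun n => by rw [show -((n:ℤ)+1) = -(n:ℤ)-1 from by ring]
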